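/- Convex conjugate of the Cressie–Read family generator (Table 1, Cressie–Read row): Fix a real k > 1 and let ψ(t) = (t^k − kt + k − 1)/(k(k − 1)) for t ≥ 0 and ψ(t) = +∞ for t < 0. Then its convex conjugate satisfies ψ*(s) = (1/k)((max((k − 1)s + 1, 0))^{k/(k−1)} − 1) for all s ∈ ℝ. -/

import Mathlib

lemma cr_key (k : ℝ) (hk : 1 < k) (s t : ℝ) (ht : 0 ≤ t) :
    s * t - (t ^ k - k * t + k - 1) / (k * (k - 1))
      ≤ (1 / k) * ((max ((k - 1) * s + 1) 0) ^ (k / (k - 1)) - 1) := by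
  have hk0 : (0:ℝ) < k := lt_trans zero_lt_one hk
  have hk1 : (0:ℝ) < k - 1 := by linarith
  set c : ℝ := max ((k - 1) * s + 1) 0 with hc
  have hc0 : 0 ≤ c := le_max_right _ _
  have hconj : k.HolderConjugate (k / (k - 1)) := (Real.holderConjugate_iff_eq_conjExponent hk).2 rfl
  have hyoung := Real.young_inequality_of_nonneg ht hc0 hconj
  have hct : ((k - 1) * s + 1) * t ≤ c * t :=
    mul_le_mul_of_nonneg_right (le_max_left _ _) ht
  have hq : c ^ (k / (k - 1)) / (k / (k - 1)) = (k - 1) / k * c ^ (k / (k - 1)) := by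
    rw [div_div_eq_mul_div]; ring
  rw [hq] at hyoung
  have key : k * (((k - 1) * s + 1) * t) ≤ t ^ k + (k - 1) * c ^ (k / (k - 1)) := by
    have h2 := mul_le_mul_of_nonneg_left hyoung (le_of_lt hk0)
    calc k * (((k - 1) * s + 1) * t) ≤ k * (c * t) := by nlinarith
      _ = k * (t * c) := by ring
      _ ≤ k * (t ^ k / k + (k - 1) / k * c ^ (k / (k - 1))) := h2
      _ = t ^ k + (k - 1) * c ^ (k / (k - 1)) := by field_simp
  have hD : (0:ℝ) < k * (k - 1) := by positivity
  rw [show s * t - (t ^ k - k * t + k - 1) / (k * (k - 1))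
      = (k * (k - 1) * (s * t) - (t ^ k - k * t + k - 1)) / (k * (k - 1)) from by
        field_simp,
    show (1 / k) * (c ^ (k / (k - 1)) - 1)
      = ((k - 1) * (c ^ (k / (k - 1)) - 1)) / (k * (k - 1)) from by
        field_simp,
    div_le_div_iff_of_pos_right hD]
  nlinarith [key]

lemma cr_eq (k : ℝ) (hk : 1 < k) (s : ℝ) :
    s * ((max ((k - 1) * s + 1) 0) ^ (1 / (k - 1)))
      - (((max ((k - 1) * s + 1) 0) ^ (1 / (k - 1))) ^ k
          - k * ((max ((k - 1) * s + 1) 0) ^ (1 / (k - 1))) + k - 1) / (k * (k - 1))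
      = (1 / k) * ((max ((k - 1) * s + 1) 0) ^ (k / (k - 1)) - 1) := by
  have hk0 : (0:ℝ) < k := lt_trans zero_lt_one hk
  have hk1 : (0:ℝ) < k - 1 := by linarith
  set c : ℝ := max ((k - 1) * s + 1) 0 with hc
  have hc0 : 0 ≤ c := le_max_right _ _
  rcases eq_or_lt_of_le hc0 with h0 | hpos
  · rw [← h0]
    rw [Real.zero_rpow (by positivity), Real.zero_rpow (ne_of_gt hk0),
      Real.zero_rpow (by positivity)]
    field_simp
    ring
  · have ha : 0 ≤ (k - 1) * s + 1 := by
      by_contra h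
      push_neg at h
      rw [hc, max_eq_right h.le] at hpos
      exact lt_irrefl 0 hpos
    have hceq : c = (k - 1) * s + 1 := max_eq_left ha
    have h1 : (c ^ (1 / (k - 1))) ^ k = c ^ (k / (k - 1)) := by
      rw [← Real.rpow_mul hc0]
      congr 1
      field_simp
    have h2 : c * c ^ (1 / (k - 1)) = c ^ (k / (k - 1)) := by
      rw [show k / (k - 1) = 1 + 1 / (k - 1) from by field_simp; ring,
        Real.rpow_add hpos, Real.rpow_one]
    rw [h1]
    have hs : (k - 1) * s = c - 1 := by rw [hceq]; ring
    field_simp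
    linear_combination k * h2 + k * c ^ (1 / (k - 1)) * hs

theorem stmt14 (k : ℝ) (hk : 1 < k) :
    ∀ s : ℝ,
      (⨆ t : ℝ, ((s * t : ℝ) : EReal) -
          (if t < 0 then (⊤ : EReal)
           else (((t ^ k - k * t + k - 1) / (k * (k - 1)) : ℝ) : EReal)))
        = (((1 / k) * ((max ((k - 1) * s + 1) 0) ^ (k / (k - 1)) - 1) : ℝ) : EReal) := by
  intro s
  apply le_antisymm
  · apply iSup_le
    intro t
    by_cases ht : t < 0
    · rw [if_pos ht, EReal.sub_top]
      exact bot_le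
    · rw [if_neg ht, ← EReal.coe_sub]
      exact_mod_cast cr_key k hk s t (not_lt.mp ht)
  · set t : ℝ := (max ((k - 1) * s + 1) 0) ^ (1 / (k - 1)) with htdef
    have ht : 0 ≤ t := Real.rpow_nonneg (le_max_right _ _) _
    have h := le_iSup (fun t : ℝ => ((s * t : ℝ) : EReal) -
          (if t < 0 then (⊤ : EReal)
           else (((t ^ k - k * t + k - 1) / (k * (k - 1)) : ℝ) : EReal))) t
    simp only [if_neg (not_lt.mpr ht), ← EReal.coe_sub] at h
    refine le_trans (le_of_eq ?_) h
    exact_mod_cast (cr_eq k hk s).symm
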